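/- Let 1 ≤ d_0 ≤ d be integers, C ≥ 1, and let φ : ℝ^{d_0} → ℝ^d be injective with φ and φ^{−1} (on the range of φ) both C-Lipschitz with respect to the sup norms. Then there exists a constant C' > 1 depending only on C, d, d_0 such that for A := φ((0,a)^{d_0}) and all reals a, h with 0 < h ≤ a ≤ 1: (1/C') a^{d_0} h^{d−d_0} ≤ Vol(B(A,h)) ≤ C' a^{d_0} h^{d−d_0}, where B(A,h) = {x ∈ ℝ^d : dist_∞(x, A) < h}. Moreover, if ψ : ℝ^d → ℝ^d is injective with ψ and ψ^{−1} both C-Lipschitz and A := ψ(∂B(0,1)) is the image of the sup-norm unit sphere, then there exists C' > 1 depending only on C and d such that (1/C') h ≤ Vol(B(A,h)) ≤ C' h for all h ∈ (0,1). -/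

import Mathlib

open MeasureTheory Set

noncomputable section
open scoped ENNReal


lemma vol_ball_pi (d : ℕ) (x : Fin d → ℝ) (r : ℝ) (hr : 0 < r) :
    volume (Metric.ball x r) = ENNReal.ofReal ((2*r)^d) := by
  rw [Real.volume_pi_ball _ hr, Fintype.card_fin]

lemma vol_le_of_cover {d : ℕ} {ι : Type*} [Fintype ι] (c : ι → (Fin d → ℝ)) (r : ℝ)
    (hr : 0 < r) {T : Set (Fin d → ℝ)} (hT : T ⊆ ⋃ i, Metric.ball (c i) r) :
    volume T ≤ (Fintype.card ι) * ENNReal.ofReal ((2*r)^d) := by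
  calc volume T ≤ volume (⋃ i, Metric.ball (c i) r) := measure_mono hT
  _ ≤ ∑ i : ι, volume (Metric.ball (c i) r) := measure_iUnion_fintype_le _ _
  _ = (Fintype.card ι) * ENNReal.ofReal ((2*r)^d) := by
      simp [vol_ball_pi d _ r hr, Finset.sum_const, mul_comm]

lemma vol_ge_of_pack {d : ℕ} {ι : Type*} [Fintype ι] (c : ι → (Fin d → ℝ)) (r : ℝ)
    (hr : 0 < r) (hsep : ∀ i j : ι, i ≠ j → 2*r ≤ dist (c i) (c j))
    {T : Set (Fin d → ℝ)} (hT : ∀ i, Metric.ball (c i) r ⊆ T) :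
    (Fintype.card ι) * ENNReal.ofReal ((2*r)^d) ≤ volume T := by
  have hdisj : Pairwise (Function.onFun Disjoint fun i => Metric.ball (c i) r) := by
    intro i j hij
    exact Metric.ball_disjoint_ball (by linarith [hsep i j hij])
  calc (Fintype.card ι : ℝ≥0∞) * ENNReal.ofReal ((2*r)^d)
      = ∑ i : ι, volume (Metric.ball (c i) r) := by
        simp [vol_ball_pi d _ r hr, Finset.sum_const, mul_comm]
    _ = ∑' i : ι, volume (Metric.ball (c i) r) := (tsum_fintype _).symm
    _ = volume (⋃ i, Metric.ball (c i) r) :=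
        (measure_iUnion hdisj fun i => measurableSet_ball).symm
    _ ≤ volume T := measure_mono (iUnion_subset hT)

lemma net1d {h t : ℝ} (hh : 0 < h) {n : ℕ} (hn : 1 ≤ n) (ht0 : 0 ≤ t) (htn : t ≤ n * h) :
    ∃ k : Fin n, |t - h * k| ≤ h := by
  by_cases hc : ⌊t/h⌋₊ ≤ n - 1
  · refine ⟨⟨⌊t/h⌋₊, by omega⟩, ?_⟩
    have h1 : (⌊t/h⌋₊ : ℝ) ≤ t / h := Nat.floor_le (by positivity)
    have h2 : t / h < ⌊t/h⌋₊ + 1 := Nat.lt_floor_add_one _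
    rw [abs_le]
    have e1 : (⌊t/h⌋₊ : ℝ) * h ≤ t := by
      have := mul_le_mul_of_nonneg_right h1 hh.le
      rwa [div_mul_cancel₀ t hh.ne'] at this
    have e2 : t < ((⌊t/h⌋₊ : ℝ) + 1) * h := by
      have := mul_lt_mul_of_pos_right h2 hh
      rwa [div_mul_cancel₀ t hh.ne'] at this
    constructor <;> simp only [Fin.val_mk] <;> nlinarith
  · refine ⟨⟨n - 1, by omega⟩, ?_⟩
    have h1 : (n : ℝ) ≤ t / h := by
      have hnf : n ≤ ⌊t/h⌋₊ := by omega
      exact_mod_cast (Nat.le_floor_iff (by positivity)).mp hnf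
    have e1 : (n : ℝ) * h ≤ t := by
      have := mul_le_mul_of_nonneg_right h1 hh.le
      rwa [div_mul_cancel₀ t hh.ne'] at this
    have hcast : ((n - 1 : ℕ) : ℝ) = (n : ℝ) - 1 := by
      rw [Nat.cast_sub hn]; simp
    rw [abs_le]
    simp only [Fin.val_mk, hcast]
    constructor <;> nlinarith

lemma toReal_bounds {A : ℝ≥0∞} {L U : ℝ}
    (h1 : ENNReal.ofReal L ≤ A) (h2 : A ≤ ENNReal.ofReal U) (hU : 0 ≤ U) :
    L ≤ A.toReal ∧ A.toReal ≤ U := by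
  have hA : A ≠ ⊤ := (lt_of_le_of_lt h2 ENNReal.ofReal_lt_top).ne
  exact ⟨(ENNReal.ofReal_le_iff_le_toReal hA).mp h1, ENNReal.toReal_le_of_le_ofReal hU h2⟩

lemma natmul_ofReal (m : ℕ) (x : ℝ) (hx : 0 ≤ x) :
    (m : ℝ≥0∞) * ENNReal.ofReal x = ENNReal.ofReal (m * x) := by
  rw [← ENNReal.ofReal_natCast, ← ENNReal.ofReal_mul (by positivity)]

lemma thickening_subset_balls {d0 d : ℕ} {C h : ℝ} (hC : 1 ≤ C) (hh : 0 < h)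
    (φ : (Fin d0 → ℝ) → (Fin d → ℝ))
    (hφ : ∀ u v, dist (φ u) (φ v) ≤ C * dist u v) {S : Set (Fin d0 → ℝ)}
    {ι : Type*} (c : ι → (Fin d0 → ℝ))
    (hnet : ∀ u ∈ S, ∃ i, dist u (c i) ≤ h) :
    Metric.thickening h (φ '' S) ⊆ ⋃ i, Metric.ball (φ (c i)) ((C+1)*h) := by
  intro x hx
  obtain ⟨y, ⟨u, hu, rfl⟩, hxy⟩ := Metric.mem_thickening_iff.mp hx
  obtain ⟨i, hi⟩ := hnet u hu
  refine mem_iUnion.mpr ⟨i, ?_⟩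
  have h1 := hφ u (c i)
  have h2 := dist_triangle x (φ u) (φ (c i))
  simp only [Metric.mem_ball]
  nlinarith

lemma ball_subset_thickening' {d0 d : ℕ} {h : ℝ} (φ : (Fin d0 → ℝ) → (Fin d → ℝ))
    {S : Set (Fin d0 → ℝ)} {u : Fin d0 → ℝ} (hu : u ∈ S) :
    Metric.ball (φ u) h ⊆ Metric.thickening h (φ '' S) := by
  intro x hx
  exact Metric.mem_thickening_iff.mpr ⟨φ u, mem_image_of_mem φ hu, hx⟩

lemma floor_ge_half {x : ℝ} (hx : 1 ≤ x) : x / 2 ≤ (⌊x⌋₊ : ℝ) := by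
  have h1 : 1 ≤ (⌊x⌋₊ : ℝ) := by exact_mod_cast (Nat.one_le_floor_iff x).mpr hx
  have h2 : x < ⌊x⌋₊ + 1 := Nat.lt_floor_add_one x
  linarith

def coIdx {d : ℕ} (i : Fin d) (k : Fin (d-1)) : Fin d :=
  ⟨if k.val < i.val then k.val else k.val + 1, by
    have := k.2; have := i.2; split <;> omega⟩

def faceIdx {d : ℕ} (i j : Fin d) (hj : j ≠ i) : Fin (d-1) :=
  ⟨if j.val < i.val then j.val else j.val - 1, by
    have := Fin.val_ne_of_ne hj; have := j.2; have := i.2; split <;> omega⟩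

lemma coIdx_ne {d : ℕ} (i : Fin d) (k : Fin (d-1)) : coIdx i k ≠ i := by
  intro hcon
  have hv : (if k.val < i.val then k.val else k.val + 1) = i.val := congrArg Fin.val hcon
  have := k.2
  split at hv <;> omega

lemma coIdx_faceIdx {d : ℕ} (i j : Fin d) (hj : j ≠ i) : coIdx i (faceIdx i j hj) = j := by
  have hne := Fin.val_ne_of_ne hj
  apply Fin.ext
  simp only [coIdx, faceIdx]
  split_ifs <;> omega

lemma faceIdx_coIdx {d : ℕ} (i : Fin d) (k : Fin (d-1)) (hj : coIdx i k ≠ i) :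
    faceIdx i (coIdx i k) hj = k := by
  apply Fin.ext
  simp only [faceIdx, coIdx]
  split_ifs <;> omega

set_option maxHeartbeats 1000000 in
lemma part1 (d : ℕ) (hd : 1 ≤ d) (C : ℝ) (hC : 1 ≤ C) (d0 : ℕ) (hd01 : 1 ≤ d0) (hd0d : d0 ≤ d) :
    ∃ C' : ℝ, 1 < C' ∧
      ∀ φ : (Fin d0 → ℝ) → (Fin d → ℝ), Function.Injective φ →
        (∀ u v, dist (φ u) (φ v) ≤ C * dist u v) →
        (∀ u v, dist u v ≤ C * dist (φ u) (φ v)) →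
        ∀ a h : ℝ, 0 < h → h ≤ a → a ≤ 1 →
          (1 / C') * a ^ d0 * h ^ (d - d0) ≤
              (volume (Metric.thickening h
                (φ '' {u : Fin d0 → ℝ | ∀ k, u k ∈ Set.Ioo (0 : ℝ) a}))).toReal ∧
            (volume (Metric.thickening h
                (φ '' {u : Fin d0 → ℝ | ∀ k, u k ∈ Set.Ioo (0 : ℝ) a}))).toReal ≤
              C' * a ^ d0 * h ^ (d - d0) := by
  refine ⟨(16*C)^d, ?_, ?_⟩
  · calc (1:ℝ) < 16 := by norm_num
    _ = (16*C)^1 * (1/C) := by field_simp [show C ≠ 0 by linarith]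
    _ ≤ (16*C)^d * 1 := by
        apply mul_le_mul (pow_le_pow_right₀ (by linarith) hd) (by rw [div_le_one (by linarith)]; linarith) (by positivity) (by positivity)
    _ = (16*C)^d := mul_one _
  intro φ hinj hlip hlip' a h hh hha ha1
  have ha : 0 < a := lt_of_lt_of_le hh hha
  set C' : ℝ := (16*C)^d with hC'def
  have hC'pos : 0 < C' := by positivity
  set S : Set (Fin d0 → ℝ) := {u : Fin d0 → ℝ | ∀ k, u k ∈ Set.Ioo (0 : ℝ) a} with hSdef
  set T := Metric.thickening h (φ '' S) with hTdef
  -- upper bound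
  set n := ⌈a/h⌉₊ with hndef
  have hn1 : 1 ≤ n := Nat.ceil_pos.mpr (by positivity)
  have hnet : ∀ u ∈ S, ∃ v : Fin d0 → Fin n, dist u (fun k => h * ((v k : ℕ) : ℝ)) ≤ h := by
    intro u hu
    have hch : ∀ k, ∃ j : Fin n, |u k - h * j| ≤ h := by
      intro k
      apply net1d hh hn1 (hu k).1.le
      calc u k ≤ a := (hu k).2.le
      _ = (a/h) * h := (div_mul_cancel₀ a hh.ne').symm
      _ ≤ (n:ℝ) * h := mul_le_mul_of_nonneg_right (Nat.le_ceil (a/h)) hh.le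
    choose v hv using hch
    refine ⟨v, (dist_pi_le_iff hh.le).mpr fun k => ?_⟩
    rw [Real.dist_eq]; exact hv k
  have hcover := thickening_subset_balls hC hh φ hlip
    (fun (v : Fin d0 → Fin n) (k : Fin d0) => h * ((v k : ℕ) : ℝ)) hnet
  have hUB1 : volume T ≤ (Fintype.card (Fin d0 → Fin n)) * ENNReal.ofReal ((2*((C+1)*h))^d) :=
    vol_le_of_cover _ _ (by positivity) hcover
  have hcard : Fintype.card (Fin d0 → Fin n) = n ^ d0 := by simp
  have hUB2 : volume T ≤ ENNReal.ofReal (C' * a^d0 * h^(d-d0)) := by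
    refine le_trans hUB1 ?_
    rw [hcard, natmul_ofReal _ _ (by positivity)]
    apply ENNReal.ofReal_le_ofReal
    push_cast
    have hnh : (n:ℝ) * h ≤ 2 * a := by
      have h1 : (n:ℝ) < a/h + 1 := Nat.ceil_lt_add_one (by positivity)
      have h2 : 1 ≤ a / h := (one_le_div hh).mpr hha
      have h3 : (n:ℝ) ≤ 2 * (a/h) := by linarith
      calc (n:ℝ) * h ≤ (2*(a/h)) * h := mul_le_mul_of_nonneg_right h3 hh.le
      _ = 2 * a := by field_simp
    have hsplit : h^d = h^d0 * h^(d-d0) := by rw [← pow_add]; congr 1; omega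
    have hcoef : (2:ℝ)^d0 * (2*(C+1))^d ≤ (16*C)^d := by
      have h1 : (2:ℝ)^d0 ≤ 2^d := pow_le_pow_right₀ one_le_two hd0d
      have h2 : (2*(C+1):ℝ)^d ≤ (8*C)^d := pow_le_pow_left₀ (by positivity) (by linarith) d
      calc (2:ℝ)^d0 * (2*(C+1))^d ≤ 2^d * (8*C)^d :=
            mul_le_mul h1 h2 (by positivity) (by positivity)
      _ = (16*C)^d := by rw [← mul_pow]; ring_nf
    calc (n:ℝ)^d0 * (2*((C+1)*h))^d
        = ((n:ℝ)*h)^d0 * ((2*(C+1))^d * h^(d-d0)) := by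
          rw [show (2*((C+1)*h) : ℝ) = (2*(C+1))*h by ring, mul_pow (2*(C+1)) h d, hsplit,
            mul_pow (n:ℝ) h d0]
          ring
      _ ≤ (2*a)^d0 * ((2*(C+1))^d * h^(d-d0)) :=
          mul_le_mul_of_nonneg_right (pow_le_pow_left₀ (by positivity) hnh d0) (by positivity)
      _ = (2^d0 * (2*(C+1))^d) * a^d0 * h^(d-d0) := by rw [mul_pow]; ring
      _ ≤ C' * a^d0 * h^(d-d0) := by
          apply mul_le_mul_of_nonneg_right
            (mul_le_mul_of_nonneg_right hcoef (by positivity)) (by positivity)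
  -- lower bound
  have hLB : ENNReal.ofReal ((1/C') * a^d0 * h^(d-d0)) ≤ volume T := by
    by_cases hcase : a ≤ 4*C*h
    · have hmem : (fun _ : Fin d0 => a/2) ∈ S := fun k => ⟨by positivity, by simp; linarith⟩
      have hpack := vol_ge_of_pack (ι := Unit) (fun _ => φ (fun _ => a/2)) h hh
        (fun i j hij => absurd (Subsingleton.elim i j) hij)
        (fun _ => ball_subset_thickening' φ hmem)
      refine le_trans ?_ hpack
      rw [Fintype.card_unit, Nat.cast_one, one_mul]
      apply ENNReal.ofReal_le_ofReal
      have h1 : a^d0 ≤ (4*C*h)^d0 := pow_le_pow_left₀ ha.le hcase d0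
      have h2 : (4*C:ℝ)^d0 ≤ C' := by
        calc (4*C:ℝ)^d0 ≤ (4*C)^d := pow_le_pow_right₀ (by linarith) hd0d
        _ ≤ (16*C)^d := pow_le_pow_left₀ (by positivity) (by linarith) d
      have h3 : h^d0 * h^(d-d0) = h^d := by rw [← pow_add]; congr 1; omega
      have h4 : h^d ≤ (2*h)^d := pow_le_pow_left₀ (by positivity) (by linarith) d
      calc (1/C') * a^d0 * h^(d-d0) ≤ (1/C') * ((4*C)^d0 * h^d0) * h^(d-d0) := by
            apply mul_le_mul_of_nonneg_right _ (by positivity)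
            apply mul_le_mul_of_nonneg_left _ (by positivity)
            rw [← mul_pow]; exact h1
      _ = ((4*C)^d0 / C') * h^d := by rw [← h3]; ring
      _ ≤ 1 * h^d := by
            apply mul_le_mul_of_nonneg_right _ (by positivity)
            rw [div_le_one hC'pos]; exact h2
      _ = h^d := one_mul _
      _ ≤ (2*h)^d := h4
    · push_neg at hcase
      set m := ⌊a/(4*C*h)⌋₊ with hmdef
      have hx1 : 1 ≤ a/(4*C*h) := by rw [le_div_iff₀ (by positivity)]; linarith
      have hmle : (m:ℝ) ≤ a/(4*C*h) := Nat.floor_le (by positivity)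
      have hmge : a/(4*C*h)/2 ≤ (m:ℝ) := floor_ge_half hx1
      have h4chm : 4*C*h*(m:ℝ) ≤ a := by
        rw [mul_comm]
        calc (m:ℝ) * (4*C*h) ≤ (a/(4*C*h)) * (4*C*h) := mul_le_mul_of_nonneg_right hmle (by positivity)
        _ = a := div_mul_cancel₀ a (by positivity)
      set c : (Fin d0 → Fin m) → (Fin d0 → ℝ) := fun v k => 4*C*h*((v k : ℕ):ℝ) + 2*C*h with hcdef
      have hcS : ∀ v, c v ∈ S := by
        intro v k
        have hv0 : (0:ℝ) ≤ ((v k : ℕ):ℝ) := Nat.cast_nonneg _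
        have hv1 : ((v k : ℕ):ℝ) + 1 ≤ (m:ℝ) := by exact_mod_cast (v k).2
        constructor
        · simp only [hcdef]; positivity
        · simp only [hcdef]; nlinarith
      have hsep : ∀ v w : Fin d0 → Fin m, v ≠ w → 2*h ≤ dist (φ (c v)) (φ (c w)) := by
        intro v w hvw
        obtain ⟨k, hk⟩ := Function.ne_iff.mp hvw
        have hne : (((v k).val : ℤ)) ≠ ((w k).val : ℤ) := by
          exact_mod_cast fun hcon => hk (Fin.ext hcon)
        have habsz : (1:ℤ) ≤ |((v k).val : ℤ) - ((w k).val : ℤ)| :=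
          Int.one_le_abs (sub_ne_zero.mpr hne)
        have habs : (1:ℝ) ≤ |(((v k).val : ℕ):ℝ) - (((w k).val : ℕ):ℝ)| := by
          have := habsz
          push_cast at this ⊢
          exact_mod_cast this
        have hcoord : dist (c v k) (c w k) = 4*C*h * |(((v k).val:ℕ):ℝ) - (((w k).val:ℕ):ℝ)| := by
          rw [Real.dist_eq]
          rw [show c v k - c w k = 4*C*h * ((((v k).val:ℕ):ℝ) - (((w k).val:ℕ):ℝ)) by simp only [hcdef]; ring]
          rw [abs_mul, abs_of_pos (by positivity : (0:ℝ) < 4*C*h)]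
        have hd1 : 4*C*h ≤ dist (c v) (c w) := by
          have hle := dist_le_pi_dist (c v) (c w) k
          rw [hcoord] at hle
          nlinarith [dist_nonneg (x := c v) (y := c w)]
        have hlc := hlip' (c v) (c w)
        have hCpos : (0:ℝ) < C := by linarith
        have : 4*h ≤ dist (φ (c v)) (φ (c w)) := by
          rw [← mul_le_mul_iff_right₀ hCpos]
          calc C * (4*h) = 4*C*h := by ring
          _ ≤ dist (c v) (c w) := hd1
          _ ≤ C * dist (φ (c v)) (φ (c w)) := hlc
        linarith
      have hpack := vol_ge_of_pack (fun v : Fin d0 → Fin m => φ (c v)) h hh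
        (fun v w hvw => by rw [show 2*h = 2*h by rfl]; exact hsep v w hvw)
        (fun v => ball_subset_thickening' φ (hcS v))
      refine le_trans ?_ hpack
      have hcard2 : Fintype.card (Fin d0 → Fin m) = m ^ d0 := by simp
      rw [hcard2, natmul_ofReal _ _ (by positivity)]
      apply ENNReal.ofReal_le_ofReal
      push_cast
      have hA : (1/C')*a^d0 ≤ (a/(4*C))^d0 := by
        rw [div_pow]
        calc (1/C')*a^d0 ≤ (1/(4*C)^d0)*a^d0 := by
              apply mul_le_mul_of_nonneg_right _ (by positivity)
              apply one_div_le_one_div_of_le (by positivity)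
              calc ((4*C:ℝ))^d0 ≤ (4*C)^d := pow_le_pow_right₀ (by linarith) hd0d
              _ ≤ (16*C)^d := pow_le_pow_left₀ (by positivity) (by linarith) d
        _ = a^d0/(4*C)^d0 := by ring
      have hB : a/(4*C) ≤ (m:ℝ)*(2*h) := by
        have heq : a/(4*C*h)/2 * (2*h) = a/(4*C) := by field_simp
        calc a/(4*C) = a/(4*C*h)/2*(2*h) := heq.symm
        _ ≤ (m:ℝ)*(2*h) := mul_le_mul_of_nonneg_right hmge (by positivity)
      have hsplit2 : (2*h)^d = (2*h)^d0 * (2*h)^(d-d0) := by rw [← pow_add]; congr 1; omega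
      calc (1/C')*a^d0*h^(d-d0) ≤ (a/(4*C))^d0 * h^(d-d0) :=
            mul_le_mul_of_nonneg_right hA (by positivity)
      _ ≤ ((m:ℝ)*(2*h))^d0 * (2*h)^(d-d0) := by
          apply mul_le_mul (pow_le_pow_left₀ (by positivity) hB d0)
            (pow_le_pow_left₀ (by positivity) (by linarith) _) (by positivity) (by positivity)
      _ = (m:ℝ)^d0 * (2*h)^d := by rw [hsplit2, mul_pow]; ring
  exact toReal_bounds hLB hUB2 (by positivity)

set_option maxHeartbeats 2000000 in
lemma part2 (d : ℕ) (hd : 1 ≤ d) (C : ℝ) (hC : 1 ≤ C) :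
    ∃ C' : ℝ, 1 < C' ∧
      ∀ ψ : (Fin d → ℝ) → (Fin d → ℝ), Function.Injective ψ →
        (∀ u v, dist (ψ u) (ψ v) ≤ C * dist u v) →
        (∀ u v, dist u v ≤ C * dist (ψ u) (ψ v)) →
        ∀ h : ℝ, h ∈ Set.Ioo (0 : ℝ) 1 →
          (1 / C') * h ≤
              (volume (Metric.thickening h
                (ψ '' Metric.sphere (0 : Fin d → ℝ) 1))).toReal ∧
            (volume (Metric.thickening h
                (ψ '' Metric.sphere (0 : Fin d → ℝ) 1))).toReal ≤ C' * h := by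
  have hd1 : (1:ℝ) ≤ (d:ℝ) := by exact_mod_cast hd
  have h16C : (1:ℝ) ≤ 16*C := by linarith
  have hpow1 : (1:ℝ) ≤ (16*C)^d := one_le_pow₀ h16C
  refine ⟨2*d*(16*C)^d, by nlinarith, ?_⟩
  intro ψ hinj hlip hlip' h hmem
  obtain ⟨hh, hlt1⟩ := hmem
  set C' : ℝ := 2*d*(16*C)^d with hC'def
  have hC'pos : 0 < C' := by positivity
  set S := Metric.sphere (0 : Fin d → ℝ) 1 with hSdef
  set T := Metric.thickening h (ψ '' S) with hTdef
  -- upper bound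
  set n := ⌈2/h⌉₊ with hndef
  have hn1 : 1 ≤ n := Nat.ceil_pos.mpr (by positivity)
  have hn2 : 2 ≤ (n:ℝ) * h := by
    calc (2:ℝ) = (2/h)*h := (div_mul_cancel₀ 2 hh.ne').symm
    _ ≤ (n:ℝ)*h := mul_le_mul_of_nonneg_right (Nat.le_ceil (2/h)) hh.le
  set c : Bool × Fin d × (Fin (d-1) → Fin n) → (Fin d → ℝ) :=
    fun t j => if hj : j = t.2.1 then (if t.1 then 1 else -1)
      else h * (((t.2.2 (faceIdx t.2.1 j hj)) : ℕ) : ℝ) - 1 with hcdef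
  have hnet : ∀ x ∈ S, ∃ t : Bool × Fin d × (Fin (d-1) → Fin n), dist x (c t) ≤ h := by
    intro x hx
    have hxn : ‖x‖ = 1 := by
      rw [hSdef, mem_sphere_zero_iff_norm] at hx; exact hx
    have hxj : ∀ j, ‖x j‖ ≤ 1 := fun j => hxn ▸ norm_le_pi_norm x j
    obtain ⟨i, -, hi⟩ := Finset.exists_max_image Finset.univ (fun j => ‖x j‖)
      ⟨⟨0, hd⟩, Finset.mem_univ _⟩
    have hxi : ‖x i‖ = 1 := by
      refine le_antisymm (hxj i) ?_
      rw [← hxn]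
      exact (pi_norm_le_iff_of_nonneg (norm_nonneg (x i))).mpr
        (fun j => hi j (Finset.mem_univ j))
    have hchoice : ∀ k : Fin (d-1), ∃ j : Fin n, |x (coIdx i k) + 1 - h * j| ≤ h := by
      intro k
      apply net1d hh hn1
      · have := hxj (coIdx i k)
        rw [Real.norm_eq_abs, abs_le] at this
        linarith [this.1]
      · have := hxj (coIdx i k)
        rw [Real.norm_eq_abs, abs_le] at this
        linarith [this.2]
    choose v hv using hchoice
    have hxi' : x i = 1 ∨ x i = -1 := by
      rw [Real.norm_eq_abs] at hxi
      rcases (abs_eq (by norm_num : (0:ℝ) ≤ 1)).mp hxi with h1 | h1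
      · exact Or.inl h1
      · exact Or.inr h1
    obtain ⟨s, hs⟩ : ∃ s : Bool, (if s then (1:ℝ) else -1) = x i := by
      rcases hxi' with h1 | h1
      · exact ⟨true, by simp [h1]⟩
      · exact ⟨false, by simp [h1]⟩
    refine ⟨(s, i, v), (dist_pi_le_iff hh.le).mpr fun j => ?_⟩
    by_cases hj : j = i
    · subst hj
      simp only [hcdef, dif_pos rfl]
      rw [hs, dist_self]
      exact hh.le
    · simp only [hcdef, dif_neg hj]
      have hvk := hv (faceIdx i j hj)
      rw [coIdx_faceIdx i j hj] at hvk
      rw [Real.dist_eq,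
        show x j - (h * (((v (faceIdx i j hj)) : ℕ) : ℝ) - 1)
          = x j + 1 - h * (((v (faceIdx i j hj)) : ℕ) : ℝ) by ring]
      exact hvk
  have hcover := thickening_subset_balls hC hh ψ hlip c hnet
  have hUB1 : volume T ≤ (Fintype.card (Bool × Fin d × (Fin (d-1) → Fin n))) *
      ENNReal.ofReal ((2*((C+1)*h))^d) :=
    vol_le_of_cover _ ((C+1)*h) (by positivity) hcover
  have hcard : Fintype.card (Bool × Fin d × (Fin (d-1) → Fin n)) = 2 * (d * n^(d-1)) := by
    simp
  have hUB2 : volume T ≤ ENNReal.ofReal (C' * h) := by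
    refine le_trans hUB1 ?_
    rw [hcard, natmul_ofReal _ _ (by positivity)]
    apply ENNReal.ofReal_le_ofReal
    push_cast
    have hnh : (n:ℝ) * h ≤ 3 := by
      have h1 : (n:ℝ) < 2/h + 1 := Nat.ceil_lt_add_one (by positivity)
      have : (n:ℝ)*h < (2/h+1)*h := mul_lt_mul_of_pos_right h1 hh
      have h2 : (2/h+1)*h = 2 + h := by field_simp
      linarith
    have hsplit : ∀ x : ℝ, x^d = x^(d-1) * x := by
      intro x
      rw [← pow_succ]
      congr 1
      omega
    have hstep1 : (n:ℝ)^(d-1) * (2*((C+1)*h))^(d-1) ≤ (3*(2*(C+1)))^(d-1) := by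
      rw [← mul_pow]
      apply pow_le_pow_left₀ (by positivity)
      nlinarith [mul_le_mul_of_nonneg_left hnh (show (0:ℝ) ≤ 2*(C+1) by linarith)]
    have hcoef : (3*(2*(C+1)):ℝ)^(d-1) * (2*(C+1)) ≤ (16*C)^d := by
      calc (3*(2*(C+1)):ℝ)^(d-1) * (2*(C+1))
          ≤ (16*C)^(d-1) * (16*C) := by
            apply mul_le_mul (pow_le_pow_left₀ (by positivity) (by linarith) _)
              (by linarith) (by positivity) (by positivity)
      _ = (16*C)^d := by rw [← pow_succ]; congr 1; omega
    calc (2:ℝ) * ((d:ℝ) * (n:ℝ)^(d-1)) * (2*((C+1)*h))^d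
        = 2 * (d:ℝ) * (((n:ℝ)^(d-1) * (2*((C+1)*h))^(d-1)) * (2*(C+1))) * h := by
          rw [hsplit (2*((C+1)*h))]
          ring
      _ ≤ 2 * (d:ℝ) * ((3*(2*(C+1)))^(d-1) * (2*(C+1))) * h := by
          apply mul_le_mul_of_nonneg_right _ hh.le
          apply mul_le_mul_of_nonneg_left _ (by positivity)
          apply mul_le_mul_of_nonneg_right hstep1 (by positivity)
      _ ≤ 2 * (d:ℝ) * (16*C)^d * h := by
          apply mul_le_mul_of_nonneg_right _ hh.le
          apply mul_le_mul_of_nonneg_left hcoef (by positivity)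
      _ = C' * h := by rw [hC'def]
  -- lower bound
  have hLB : ENNReal.ofReal ((1/C') * h) ≤ volume T := by
    by_cases hcase : 1 ≤ 2*C*h
    · have hmem1 : (fun _ : Fin d => (1:ℝ)) ∈ S := by
        rw [hSdef, mem_sphere_zero_iff_norm]
        apply le_antisymm
        · exact (pi_norm_le_iff_of_nonneg (by norm_num)).mpr (fun j => by simp)
        · have := norm_le_pi_norm (fun _ : Fin d => (1:ℝ)) ⟨0, hd⟩
          simpa using this
      have hpack := vol_ge_of_pack (ι := Unit) (fun _ => ψ (fun _ => (1:ℝ))) h hh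
        (fun i j hij => absurd (Subsingleton.elim i j) hij)
        (fun _ => ball_subset_thickening' ψ hmem1)
      refine le_trans ?_ hpack
      rw [Fintype.card_unit, Nat.cast_one, one_mul]
      apply ENNReal.ofReal_le_ofReal
      have h1 : 1/C ≤ 2*h := by
        rw [div_le_iff₀ (by linarith)]
        nlinarith
      have h2 : (1/C:ℝ)^d ≤ (2*h)^d := pow_le_pow_left₀ (by positivity) h1 d
      have h3 : C^d ≤ C' := by
        calc C^d ≤ (16*C)^d := pow_le_pow_left₀ (by linarith) (by linarith) d
        _ ≤ 2*(d:ℝ)*(16*C)^d := by nlinarith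
      calc (1/C')*h ≤ (1/C')*1 := mul_le_mul_of_nonneg_left hlt1.le (by positivity)
      _ = 1/C' := mul_one _
      _ ≤ 1/C^d := one_div_le_one_div_of_le (by positivity) h3
      _ = (1/C)^d := by rw [one_div_pow]
      _ ≤ (2*h)^d := h2
    · push_neg at hcase
      set m := ⌊1/(2*C*h)⌋₊ with hmdef
      have hx1 : 1 ≤ 1/(2*C*h) := by
        rw [le_one_div (by positivity) (by positivity)]
        linarith
      have hmle : (m:ℝ) ≤ 1/(2*C*h) := Nat.floor_le (by positivity)
      have hmge : 1/(2*C*h)/2 ≤ (m:ℝ) := floor_ge_half hx1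
      have h2chm : 2*C*h*(m:ℝ) ≤ 1 := by
        calc 2*C*h*(m:ℝ) ≤ 2*C*h*(1/(2*C*h)) := mul_le_mul_of_nonneg_left hmle (by positivity)
        _ = 1 := mul_one_div_cancel (by positivity)
      set i0 : Fin d := ⟨0, hd⟩ with hi0def
      set c2 : (Fin (d-1) → Fin m) → (Fin d → ℝ) :=
        fun v j => if hj : j = i0 then 1
          else 4*C*h*(((v (faceIdx i0 j hj)) : ℕ) : ℝ) + 2*C*h - 1 with hc2def
      have hcoordbd : ∀ (v : Fin (d-1) → Fin m) (j : Fin d), |c2 v j| ≤ 1 := by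
        intro v j
        by_cases hj : j = i0
        · simp [hc2def, hj]
        · simp only [hc2def, dif_neg hj]
          set k := ((v (faceIdx i0 j hj) : ℕ) : ℝ) with hk
          have hk0 : (0:ℝ) ≤ k := Nat.cast_nonneg _
          have hk1 : k + 1 ≤ (m:ℝ) := by
            rw [hk]; exact_mod_cast (v (faceIdx i0 j hj)).2
          rw [abs_le]
          have hp1 : (0:ℝ) ≤ 4*C*h*k := by positivity
          have hp2 : (0:ℝ) < 2*C*h := by positivity
          have hp3 : 4*C*h*(k+1) ≤ 4*C*h*(m:ℝ) :=
            mul_le_mul_of_nonneg_left hk1 (by positivity)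
          constructor
          · linarith
          · nlinarith [h2chm]
      have hc2S : ∀ v, c2 v ∈ S := by
        intro v
        rw [hSdef, mem_sphere_zero_iff_norm]
        apply le_antisymm
        · apply (pi_norm_le_iff_of_nonneg (by norm_num)).mpr
          intro j
          rw [Real.norm_eq_abs]
          exact hcoordbd v j
        · have hval : c2 v i0 = 1 := by
            simp only [hc2def]
            exact dif_pos trivial
          have := norm_le_pi_norm (c2 v) i0
          rw [Real.norm_eq_abs, hval, abs_one] at this
          exact this
      have hsep : ∀ v w : Fin (d-1) → Fin m, v ≠ w → 2*h ≤ dist (ψ (c2 v)) (ψ (c2 w)) := by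
        intro v w hvw
        obtain ⟨k, hk⟩ := Function.ne_iff.mp hvw
        set j : Fin d := coIdx i0 k with hjdef
        have hj : j ≠ i0 := coIdx_ne i0 k
        have hface : faceIdx i0 j hj = k := faceIdx_coIdx i0 k hj
        have hne : (((v k).val : ℤ)) ≠ ((w k).val : ℤ) := by
          exact_mod_cast fun hcon => hk (Fin.ext hcon)
        have habsz : (1:ℤ) ≤ |((v k).val : ℤ) - ((w k).val : ℤ)| :=
          Int.one_le_abs (sub_ne_zero.mpr hne)
        have habs : (1:ℝ) ≤ |(((v k).val : ℕ):ℝ) - (((w k).val : ℕ):ℝ)| := by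
          push_cast at habsz ⊢
          exact_mod_cast habsz
        have hcoord : dist (c2 v j) (c2 w j)
            = 4*C*h * |(((v k).val:ℕ):ℝ) - (((w k).val:ℕ):ℝ)| := by
          rw [Real.dist_eq]
          rw [show c2 v j - c2 w j = 4*C*h * ((((v k).val:ℕ):ℝ) - (((w k).val:ℕ):ℝ)) by
            simp only [hc2def, dif_neg hj, hface]; ring]
          rw [abs_mul, abs_of_pos (by positivity : (0:ℝ) < 4*C*h)]
        have hd1 : 4*C*h ≤ dist (c2 v) (c2 w) := by
          have hle := dist_le_pi_dist (c2 v) (c2 w) j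
          rw [hcoord] at hle
          refine le_trans ?_ hle
          calc 4*C*h = 4*C*h * 1 := (mul_one _).symm
          _ ≤ 4*C*h * |(((v k).val:ℕ):ℝ) - (((w k).val:ℕ):ℝ)| :=
              mul_le_mul_of_nonneg_left habs (by positivity)
        have hlc := hlip' (c2 v) (c2 w)
        have hCpos : (0:ℝ) < C := by linarith
        have h4 : 4*h ≤ dist (ψ (c2 v)) (ψ (c2 w)) := by
          rw [← mul_le_mul_iff_right₀ hCpos]
          calc C * (4*h) = 4*C*h := by ring
          _ ≤ dist (c2 v) (c2 w) := hd1
          _ ≤ C * dist (ψ (c2 v)) (ψ (c2 w)) := hlc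
        linarith
      have hpack := vol_ge_of_pack (fun v : Fin (d-1) → Fin m => ψ (c2 v)) h hh hsep
        (fun v => ball_subset_thickening' ψ (hc2S v))
      refine le_trans ?_ hpack
      have hcard2 : Fintype.card (Fin (d-1) → Fin m) = m ^ (d-1) := by simp
      rw [hcard2, natmul_ofReal _ _ (by positivity)]
      apply ENNReal.ofReal_le_ofReal
      push_cast
      have hB : 1/(2*C) ≤ (m:ℝ)*(2*h) := by
        have heq : 1/(2*C*h)/2 * (2*h) = 1/(2*C) := by field_simp
        calc 1/(2*C) = 1/(2*C*h)/2*(2*h) := heq.symm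
        _ ≤ (m:ℝ)*(2*h) := mul_le_mul_of_nonneg_right hmge (by positivity)
      have hkey : 1/C' ≤ 2 * (1/(2*C))^(d-1) := by
        rw [one_div_pow, mul_one_div, div_le_div_iff₀ hC'pos (by positivity)]
        have e1 : (2*C:ℝ)^(d-1) ≤ (16*C)^(d-1) :=
          pow_le_pow_left₀ (by positivity) (by linarith) _
        have e2 : ((16*C):ℝ)^(d-1) ≤ (16*C)^d := pow_le_pow_right₀ h16C (by omega)
        nlinarith
      have hsplit : ((2*h):ℝ)^d = (2*h)^(d-1) * (2*h) := by
        rw [← pow_succ]; congr 1; omega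
      calc (1/C')*h ≤ (2 * (1/(2*C))^(d-1))*h :=
            mul_le_mul_of_nonneg_right hkey hh.le
      _ = (1/(2*C))^(d-1) * (2*h) := by ring
      _ ≤ ((m:ℝ)*(2*h))^(d-1) * (2*h) := by
          apply mul_le_mul_of_nonneg_right _ (by positivity)
          exact pow_le_pow_left₀ (by positivity) hB _
      _ = (m:ℝ)^(d-1) * (2*h)^d := by rw [hsplit, mul_pow]; ring
  exact toReal_bounds hLB hUB2 (by positivity)

/-- volume of sup-norm neighborhoods of bi-Lipschitz images.
(1) For `1 ≤ d0 ≤ d` there is `C' > 1` (depending only on `C, d, d0`) such that for every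
injective `φ : ℝ^{d0} → ℝ^d` with `φ, φ⁻¹` both `C`-Lipschitz (sup norms), and all
`0 < h ≤ a ≤ 1`, the neighborhood `B(φ((0,a)^{d0}), h)` has volume between
`(1/C') a^{d0} h^{d-d0}` and `C' a^{d0} h^{d-d0}`.
(2) For injective `ψ : ℝ^d → ℝ^d` with `ψ, ψ⁻¹` both `C`-Lipschitz, there is `C' > 1`
(depending only on `C, d`) such that `(1/C') h ≤ Vol(B(ψ(∂B(0,1)), h)) ≤ C' h` for
`h ∈ (0,1)`. -/
theorem volume_thickening_bilipschitz_image
    (d : ℕ) (hd : 1 ≤ d) (C : ℝ) (hC : 1 ≤ C) :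
    (∀ d0 : ℕ, 1 ≤ d0 → d0 ≤ d → ∃ C' : ℝ, 1 < C' ∧
      ∀ φ : (Fin d0 → ℝ) → (Fin d → ℝ), Function.Injective φ →
        (∀ u v, dist (φ u) (φ v) ≤ C * dist u v) →
        (∀ u v, dist u v ≤ C * dist (φ u) (φ v)) →
        ∀ a h : ℝ, 0 < h → h ≤ a → a ≤ 1 →
          (1 / C') * a ^ d0 * h ^ (d - d0) ≤
              (volume (Metric.thickening h
                (φ '' {u : Fin d0 → ℝ | ∀ k, u k ∈ Set.Ioo (0 : ℝ) a}))).toReal ∧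
            (volume (Metric.thickening h
                (φ '' {u : Fin d0 → ℝ | ∀ k, u k ∈ Set.Ioo (0 : ℝ) a}))).toReal ≤
              C' * a ^ d0 * h ^ (d - d0)) ∧
    (∃ C' : ℝ, 1 < C' ∧
      ∀ ψ : (Fin d → ℝ) → (Fin d → ℝ), Function.Injective ψ →
        (∀ u v, dist (ψ u) (ψ v) ≤ C * dist u v) →
        (∀ u v, dist u v ≤ C * dist (ψ u) (ψ v)) →
        ∀ h : ℝ, h ∈ Set.Ioo (0 : ℝ) 1 →
          (1 / C') * h ≤
              (volume (Metric.thickening h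
                (ψ '' Metric.sphere (0 : Fin d → ℝ) 1))).toReal ∧
            (volume (Metric.thickening h
                (ψ '' Metric.sphere (0 : Fin d → ℝ) 1))).toReal ≤ C' * h) := by
  exact ⟨fun d0 hd01 hd0d => part1 d hd C hC d0 hd01 hd0d, part2 d hd C hC⟩

end
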